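/- Let P be an n×n row-stochastic matrix with minimum diagonal entry f = min_j p_jj, let γ ∈ [0,1), κ = γ(1−f), λ = 1 − γf. Then (1/λ)(I − γP) = I − (κ/λ)·S, where S = (γ/κ)(P − fI) is row-stochastic (S ≥ 0, S𝟙 = 𝟙), and κ/λ ∈ [0, γ] with κ/λ < γ whenever f > 0. -/

import Mathlib

open Matrix

theorem discount_factor_reduction {n : ℕ} (P : Matrix (Fin n) (Fin n) ℝ)
    (hP : ∀ i j, 0 ≤ P i j) (hProw : P.mulVec (fun _ => 1) = fun _ => 1)
    (γ f κ lam : ℝ) (hγ0 : 0 ≤ γ) (hγ1 : γ < 1)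
    (hf : ∀ j, f ≤ P j j) (hfmin : ∃ j, P j j = f) (hf1 : f < 1)
    (hκ : κ = γ * (1 - f)) (hκpos : 0 < κ) (hlam : lam = 1 - γ * f) :
    ((1 / lam) • ((1 : Matrix (Fin n) (Fin n) ℝ) - γ • P)
        = 1 - (κ / lam) • ((γ / κ) • (P - f • (1 : Matrix (Fin n) (Fin n) ℝ)))) ∧
    (∀ i j, 0 ≤ ((γ / κ) • (P - f • (1 : Matrix (Fin n) (Fin n) ℝ))) i j) ∧
    (((γ / κ) • (P - f • (1 : Matrix (Fin n) (Fin n) ℝ))).mulVec (fun _ => 1)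
        = fun _ => 1) ∧
    0 ≤ κ / lam ∧ κ / lam ≤ γ ∧ (0 < f → κ / lam < γ) := by
  have hγpos : 0 < γ := by nlinarith
  have hf0 : 0 ≤ f := by
    obtain ⟨j, hj⟩ := hfmin
    exact hj ▸ hP j j
  have hlampos : 0 < lam := by nlinarith
  have hκne : κ ≠ 0 := ne_of_gt hκpos
  have hlamne : lam ≠ 0 := ne_of_gt hlampos
  have hcoef : κ / lam * (γ / κ) = γ / lam := by field_simp
  refine ⟨?_, ?_, ?_, ?_, ?_, ?_⟩
  · ext i j
    simp only [Matrix.smul_apply, Matrix.sub_apply, Matrix.one_apply, smul_eq_mul, smul_smul,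
      hcoef]
    by_cases h : i = j
    · simp only [h, if_pos rfl, mul_one]
      rw [hlam]
      have h1 : (1 : ℝ) - γ * f ≠ 0 := by rw [hlam] at hlamne; exact hlamne
      field_simp
      ring
    · simp only [if_neg h, mul_zero, sub_zero, zero_sub]
      ring
  · intro i j
    simp only [Matrix.smul_apply, Matrix.sub_apply, Matrix.one_apply, smul_eq_mul]
    have hdiv : 0 ≤ γ / κ := div_nonneg hγ0 hκpos.le
    by_cases h : i = j
    · simp only [h, if_pos rfl, if_true, mul_one]
      have h2 : 0 ≤ P j j - f := by linarith [hf j]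
      exact mul_nonneg hdiv h2
    · simp only [if_neg h, mul_zero, sub_zero]
      exact mul_nonneg hdiv (hP i j)
  · have h1 : ((γ / κ) • (P - f • (1 : Matrix (Fin n) (Fin n) ℝ))).mulVec (fun _ => 1)
        = (γ / κ) • (P.mulVec (fun _ => 1) - f • ((1 : Matrix (Fin n) (Fin n) ℝ)).mulVec (fun _ => 1)) := by
      rw [smul_mulVec, sub_mulVec, smul_mulVec]
    rw [h1, hProw, Matrix.one_mulVec]
    funext i
    simp only [Pi.smul_apply, Pi.sub_apply, smul_eq_mul]
    rw [hκ]
    rw [hκ] at hκne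
    field_simp
    exact div_self (sub_ne_zero.mpr hf1.ne')
  · exact div_nonneg hκpos.le hlampos.le
  · rw [div_le_iff₀ hlampos, hκ, hlam]
    nlinarith [mul_nonneg (mul_nonneg hγ0 hf0) (sub_nonneg.mpr hγ1.le)]
  · intro hfpos
    rw [div_lt_iff₀ hlampos, hκ, hlam]
    nlinarith [mul_pos (mul_pos hγpos hfpos) (by linarith : (0:ℝ) < 1 - γ)]
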